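/- Let N be a strictly monotone, absolute, normalised norm on ℝ^m and let X_1, …, X_m be real Banach spaces each having the uniform Opial property. Then the E-sum [⊕_{i=1}^m X_i]_E has the uniform Opial property; explicitly, for every ε > 0 and R > 0 there is η > 0 such that whenever for each i = 1,…,m the sequence (x_{n,i})_{n∈ℕ} is weakly null in X_i with limsup_n N(‖x_{n,1}‖,…,‖x_{n,m}‖) ≤ R, and y_i ∈ X_i with N(‖y_1‖,…,‖y_m‖) ≥ ε, then η + liminf_n N(‖x_{n,1}‖,…,‖x_{n,m}‖) ≤ liminf_n N(‖x_{n,1} − y_1‖,…,‖x_{n,m} − y_m‖). -/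

import Mathlib

open Filter Topology MeasureTheory
open scoped ENNReal ZeroAtInfty

noncomputable section

/-- A sequence in a Banach space is weakly null if `φ (x n) → 0` for every
continuous linear functional `φ`. -/
def WeaklyNull {X : Type*} [NormedAddCommGroup X] [NormedSpace ℝ X] (u : ℕ → X) : Prop :=
  ∀ φ : X →L[ℝ] ℝ, Tendsto (fun n => φ (u n)) atTop (𝓝 0)

/-- The Schur property: every weakly null sequence converges to `0` in norm. -/
def SchurProperty (X : Type*) [NormedAddCommGroup X] [NormedSpace ℝ X] : Prop :=
  ∀ u : ℕ → X, WeaklyNull u → Tendsto (fun n => ‖u n‖) atTop (𝓝 0)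

/-- The Opial modulus `r_X(c)`. -/
def opialModulus (X : Type*) [NormedAddCommGroup X] [NormedSpace ℝ X] (c : ℝ) : ℝ :=
  sInf { d : ℝ | ∃ (x : X) (u : ℕ → X), c ≤ ‖x‖ ∧ WeaklyNull u ∧
    1 ≤ liminf (fun n => ‖u n‖) atTop ∧
    d = liminf (fun n => ‖u n - x‖) atTop - 1 }

/-- The modulus `η_X(ε, R)`. -/
def etaModulus (X : Type*) [NormedAddCommGroup X] [NormedSpace ℝ X] (ε R : ℝ) : ℝ :=
  sInf { d : ℝ | ∃ (x : X) (u : ℕ → X), ε ≤ ‖x‖ ∧ WeaklyNull u ∧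
    limsup (fun n => ‖u n‖) atTop ≤ R ∧
    d = liminf (fun n => ‖u n - x‖) atTop - liminf (fun n => ‖u n‖) atTop }

/-- The García-Falset coefficient `R(X)`. -/
def garciaFalset (X : Type*) [NormedAddCommGroup X] [NormedSpace ℝ X] : ℝ :=
  sSup { a : ℝ | ∃ (x : X) (u : ℕ → X), ‖x‖ ≤ 1 ∧ (∀ n, ‖u n‖ ≤ 1) ∧ WeaklyNull u ∧
    a = liminf (fun n => ‖u n + x‖) atTop }

/-- The degree of WORTHness `w(X)`. -/
def worthDegree (X : Type*) [NormedAddCommGroup X] [NormedSpace ℝ X] : ℝ :=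
  sSup { r : ℝ | 0 ≤ r ∧ ∀ (x : X) (u : ℕ → X), WeaklyNull u →
    r * liminf (fun n => ‖u n + x‖) atTop ≤ liminf (fun n => ‖u n - x‖) atTop }

/-- Gao's modulus of u-convexity `u_X(ε)`. -/
def uModulus (X : Type*) [NormedAddCommGroup X] [NormedSpace ℝ X] (ε : ℝ) : ℝ :=
  sInf { d : ℝ | ∃ (x y : X) (φ : X →L[ℝ] ℝ), ‖x‖ = 1 ∧ ‖y‖ = 1 ∧ ‖φ‖ = 1 ∧
    φ x = 1 ∧ φ y ≤ 1 - ε ∧ d = 1 - ‖(2⁻¹ : ℝ) • (x + y)‖ }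

/-- The c₀-sum of a family of Banach spaces: the closure, inside the ℓ∞-sum, of the
set of finitely supported families. -/
def c0Sum {I : Type*} (X : I → Type*) [∀ i, NormedAddCommGroup (X i)]
    [∀ i, NormedSpace ℝ (X i)] : Submodule ℝ (lp X ∞) :=
  (Submodule.span ℝ { f : lp X ∞ | Set.Finite { i | (f : ∀ i, X i) i ≠ 0 } }).topologicalClosure

end

section AuxN
variable {m : ℕ} {N : (Fin m → ℝ) → ℝ}

lemma auxN_zero (hhom : ∀ (c : ℝ) (a : Fin m → ℝ), N (c • a) = |c| * N a) : N 0 = 0 := by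
  simpa using hhom 0 0

lemma auxN_neg (hhom : ∀ (c : ℝ) (a : Fin m → ℝ), N (c • a) = |c| * N a) (a : Fin m → ℝ) :
    N (-a) = N a := by
  have := hhom (-1) a
  simpa using this

lemma auxN_nonneg (hadd : ∀ a b : Fin m → ℝ, N (a + b) ≤ N a + N b)
    (hhom : ∀ (c : ℝ) (a : Fin m → ℝ), N (c • a) = |c| * N a) (a : Fin m → ℝ) : 0 ≤ N a := by
  have h1 := hadd a (-a)
  rw [add_neg_cancel, auxN_zero hhom, auxN_neg hhom] at h1
  linarith

lemma auxN_sum_le (hadd : ∀ a b : Fin m → ℝ, N (a + b) ≤ N a + N b)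
    (hhom : ∀ (c : ℝ) (a : Fin m → ℝ), N (c • a) = |c| * N a)
    {ι : Type*} (s : Finset ι) (f : ι → Fin m → ℝ) :
    N (∑ i ∈ s, f i) ≤ ∑ i ∈ s, N (f i) := by
  classical
  induction s using Finset.induction_on with
  | empty => simp [auxN_zero hhom]
  | insert _ _ h ih =>
    rw [Finset.sum_insert h, Finset.sum_insert h]
    exact le_trans (hadd _ _) (by linarith)

lemma auxN_single (hhom : ∀ (c : ℝ) (a : Fin m → ℝ), N (c • a) = |c| * N a)
    (hnormalised : ∀ i, N (Pi.single i 1) = 1) (i : Fin m) (c : ℝ) :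
    N (Pi.single i c) = |c| := by
  have h : Pi.single i c = c • (Pi.single i 1 : Fin m → ℝ) := by
    funext j
    rcases eq_or_ne j i with rfl | hj
    · simp
    · simp [Pi.single_apply, hj]
  rw [h, hhom, hnormalised, mul_one]

lemma auxN_le_sum (hadd : ∀ a b : Fin m → ℝ, N (a + b) ≤ N a + N b)
    (hhom : ∀ (c : ℝ) (a : Fin m → ℝ), N (c • a) = |c| * N a)
    (hnormalised : ∀ i, N (Pi.single i 1) = 1) (a : Fin m → ℝ) :
    N a ≤ ∑ i, |a i| := by
  have ha : a = ∑ i, Pi.single i (a i) := by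
    rw [Finset.univ_sum_single]
  calc N a = N (∑ i, Pi.single i (a i)) := by rw [← ha]
    _ ≤ ∑ i, N (Pi.single i (a i)) := auxN_sum_le hadd hhom _ _
    _ = ∑ i, |a i| := by simp [auxN_single hhom hnormalised]



variable {m : ℕ} {N : (Fin m → ℝ) → ℝ}

lemma auxN_upd (hadd : ∀ a b : Fin m → ℝ, N (a + b) ≤ N a + N b)
    (hhom : ∀ (c : ℝ) (a : Fin m → ℝ), N (c • a) = |c| * N a)
    (habs : ∀ a b : Fin m → ℝ, (∀ i, |a i| = |b i|) → N a = N b)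
    (c : Fin m → ℝ) (i : Fin m) {t s : ℝ} (h : |t| ≤ |s|) :
    N (Function.update c i t) ≤ N (Function.update c i s) := by
  have habs' : ∀ (r : ℝ), N (Function.update c i r) = N (Function.update c i |r|) := by
    intro r
    refine habs _ _ fun j => ?_
    rcases eq_or_ne j i with rfl | hj
    · simp
    · simp [Function.update_of_ne hj]
  rw [habs' t, habs' s]
  set t' := |t| with ht'
  set s' := |s| with hs'
  have ht0 : 0 ≤ t' := abs_nonneg t
  have hts : t' ≤ s' := h
  rcases eq_or_lt_of_le (le_trans ht0 hts) with hs0 | hs0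
  · have : t' = 0 := le_antisymm (hs0 ▸ hts) ht0
    rw [this, ← hs0]
  · have hsne : s' ≠ 0 := ne_of_gt hs0
    set lam := (s' + t') / (2 * s') with hlam
    have hlam0 : 0 ≤ lam := by positivity
    have hlam1 : lam ≤ 1 := by
      rw [hlam, div_le_one (by linarith)]
      linarith
    have heq : Function.update c i t' =
        lam • Function.update c i s' + (1 - lam) • Function.update c i (-s') := by
      funext j
      rcases eq_or_ne j i with rfl | hj
      · simp only [Pi.add_apply, Pi.smul_apply, Function.update_self, smul_eq_mul]
        have h2l : lam * (2 * s') = s' + t' :=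
          div_mul_cancel₀ _ (mul_ne_zero two_ne_zero hsne)
        linear_combination -h2l
      · simp only [Pi.add_apply, Pi.smul_apply, Function.update_of_ne hj, smul_eq_mul]
        ring
    have hneg : N (Function.update c i (-s')) = N (Function.update c i s') := by
      refine habs _ _ fun j => ?_
      rcases eq_or_ne j i with rfl | hj
      · simp
      · simp [Function.update_of_ne hj]
    calc N (Function.update c i t')
        ≤ N (lam • Function.update c i s') + N ((1 - lam) • Function.update c i (-s')) := by
          rw [heq]; exact hadd _ _
      _ = lam * N (Function.update c i s') + (1 - lam) * N (Function.update c i (-s')) := by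
          rw [hhom, hhom, abs_of_nonneg hlam0, abs_of_nonneg (by linarith)]
      _ = N (Function.update c i s') := by rw [hneg]; ring

lemma auxN_mono (hadd : ∀ a b : Fin m → ℝ, N (a + b) ≤ N a + N b)
    (hhom : ∀ (c : ℝ) (a : Fin m → ℝ), N (c • a) = |c| * N a)
    (habs : ∀ a b : Fin m → ℝ, (∀ i, |a i| = |b i|) → N a = N b)
    {a b : Fin m → ℝ} (h : ∀ i, |a i| ≤ |b i|) : N a ≤ N b := by
  classical
  have key : ∀ S : Finset (Fin m), N (S.piecewise a b) ≤ N b := by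
    intro S
    induction S using Finset.induction_on with
    | empty => simp
    | @insert j S hj ih =>
      rw [Finset.piecewise_insert]
      have h2 : Function.update (S.piecewise a b) j (b j) = S.piecewise a b := by
        have hb : b j = (S.piecewise a b) j := (Finset.piecewise_eq_of_notMem _ _ _ hj).symm
        rw [hb, Function.update_eq_self]
      calc N (Function.update (S.piecewise a b) j (a j))
          ≤ N (Function.update (S.piecewise a b) j (b j)) := auxN_upd hadd hhom habs _ _ (h j)
        _ = N (S.piecewise a b) := by rw [h2]
        _ ≤ N b := ih
  have := key Finset.univ
  simpa using this

lemma auxN_abs_le (hadd : ∀ a b : Fin m → ℝ, N (a + b) ≤ N a + N b)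
    (hhom : ∀ (c : ℝ) (a : Fin m → ℝ), N (c • a) = |c| * N a)
    (habs : ∀ a b : Fin m → ℝ, (∀ i, |a i| = |b i|) → N a = N b)
    (hnormalised : ∀ i, N (Pi.single i 1) = 1) (a : Fin m → ℝ) (i : Fin m) :
    |a i| ≤ N a := by
  have h1 : N (Pi.single i (a i)) ≤ N a := by
    refine auxN_mono hadd hhom habs fun j => ?_
    rcases eq_or_ne j i with rfl | hj
    · simp
    · simp [Pi.single_apply, hj]
  have h2 : N (Pi.single i (a i)) = |a i| := by
    have : Pi.single i (a i) = (a i) • (Pi.single i 1 : Fin m → ℝ) := by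
      funext j
      rcases eq_or_ne j i with rfl | hj
      · simp
      · simp [Pi.single_apply, hj]
    rw [this, hhom, hnormalised, mul_one]
  linarith

lemma auxN_cont (hadd : ∀ a b : Fin m → ℝ, N (a + b) ≤ N a + N b)
    (hhom : ∀ (c : ℝ) (a : Fin m → ℝ), N (c • a) = |c| * N a)
    (hnormalised : ∀ i, N (Pi.single i 1) = 1) : Continuous N := by
  rw [continuous_iff_continuousAt]
  intro b
  rw [ContinuousAt, tendsto_iff_dist_tendsto_zero]
  have hg : Tendsto (fun a : Fin m → ℝ => ∑ i, |a i - b i|) (𝓝 b) (𝓝 0) := by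
    have hc : Continuous fun a : Fin m → ℝ => ∑ i, |a i - b i| := by
      refine continuous_finset_sum _ fun i _ => ?_
      exact ((continuous_apply i).sub continuous_const).abs
    have h0 : (∑ i, |b i - b i|) = 0 := by simp
    simpa [h0] using hc.tendsto b
  refine squeeze_zero (fun a => dist_nonneg) (fun a => ?_) hg
  have h1 : N a ≤ N b + N (a - b) := by
    have := hadd b (a - b)
    simpa using this
  have h2 : N b ≤ N a + N (a - b) := by
    have := hadd a (b - a)
    have hnn : N (b - a) = N (a - b) := by
      rw [show b - a = -(a - b) by ring, auxN_neg hhom]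
    simp only [add_sub_cancel] at this
    linarith
  have h3 : N (a - b) ≤ ∑ i, |(a - b) i| := auxN_le_sum hadd hhom hnormalised _
  have h4 : (∑ i, |(a - b) i|) = ∑ i, |a i - b i| := by simp
  rw [Real.dist_eq, abs_sub_le_iff]
  constructor <;> linarith

end AuxN

section AuxF

/-- liminf is at most any subsequential limit. -/
lemma auxF_liminf_le {f : ℕ → ℝ} {θ : ℕ → ℕ} (hθ : Tendsto θ atTop atTop) {c : ℝ}
    (h : Tendsto (fun n => f (θ n)) atTop (𝓝 c))
    (hb : IsBoundedUnder (· ≥ ·) atTop f) : liminf f atTop ≤ c := by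
  by_contra hc
  push_neg at hc
  set b := (c + liminf f atTop) / 2 with hbdef
  have hcb : c < b := by simp only [hbdef]; linarith
  have hbl : b < liminf f atTop := by simp only [hbdef]; linarith
  have h1 : ∀ᶠ n in atTop, b < f n := eventually_lt_of_lt_liminf hbl hb
  have h2 : ∀ᶠ n in atTop, b ≤ f (θ n) := (hθ.eventually h1).mono fun n hn => hn.le
  exact absurd (ge_of_tendsto h h2) (not_le.2 hcb)

/-- Any subsequential limit is at most the limsup (given an eventual upper bound). -/
lemma auxF_le_limsup {f : ℕ → ℝ} {θ : ℕ → ℕ} (hθ : Tendsto θ atTop atTop) {c R : ℝ}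
    (h : Tendsto (fun n => f (θ n)) atTop (𝓝 c))
    (hb : IsBoundedUnder (· ≤ ·) atTop f)
    (hR : limsup f atTop ≤ R) : c ≤ R := by
  by_contra hc
  push_neg at hc
  set b := (R + c) / 2 with hbdef
  have hRb : R < b := by simp only [hbdef]; linarith
  have hbc : b < c := by simp only [hbdef]; linarith
  have h1 : ∀ᶠ n in atTop, f n < b := eventually_lt_of_limsup_lt (lt_of_le_of_lt hR hRb) hb
  have h2 : ∀ᶠ n in atTop, f (θ n) ≤ b := (hθ.eventually h1).mono fun n hn => hn.le
  exact absurd (le_of_tendsto h h2) (not_le.2 hbc)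

/-- A weakly null sequence is norm-bounded (Banach–Steinhaus). -/
lemma auxF_weaklyNull_bounded {X : Type*} [NormedAddCommGroup X] [NormedSpace ℝ X]
    (u : ℕ → X)
    (h : ∀ φ : X →L[ℝ] ℝ, Tendsto (fun n => φ (u n)) atTop (𝓝 0)) :
    ∃ C : ℝ, ∀ n, ‖u n‖ ≤ C := by
  set g : ℕ → StrongDual ℝ X →L[ℝ] ℝ :=
    fun n => NormedSpace.inclusionInDoubleDual ℝ X (u n) with hg
  have hpt : ∀ φ : StrongDual ℝ X, ∃ C, ∀ n, ‖g n φ‖ ≤ C := by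
    intro φ
    have hconv : Tendsto (fun n => φ (u n)) atTop (𝓝 0) := h φ
    have hbdd : ∃ C, ∀ n, |φ (u n)| ≤ C := by
      have : Tendsto (fun n => |φ (u n)|) atTop (𝓝 0) := by
        simpa using hconv.abs
      obtain ⟨C, hC⟩ := this.bddAbove_range
      exact ⟨C, fun n => hC (Set.mem_range_self n)⟩
    obtain ⟨C, hC⟩ := hbdd
    exact ⟨C, fun n => by simpa [hg, NormedSpace.dual_def, Real.norm_eq_abs] using hC n⟩
  obtain ⟨C', hC'⟩ := banach_steinhaus hpt
  refine ⟨C', fun n => ?_⟩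
  have := hC' n
  rwa [show ‖g n‖ = ‖u n‖ from (NormedSpace.inclusionInDoubleDualLi ℝ).norm_map (u n)] at this

end AuxF

/-- If `N` is a strictly monotone absolute normalised norm on `ℝ^m` and `X 1, …, X m` are Banach
spaces with the uniform Opial property, then the `E`-sum has the uniform Opial property, stated
explicitly in terms of `N` and componentwise weakly null sequences. -/
theorem statement12 (m : ℕ) (N : (Fin m → ℝ) → ℝ)
    (hadd : ∀ a b : Fin m → ℝ, N (a + b) ≤ N a + N b)
    (hhom : ∀ (c : ℝ) (a : Fin m → ℝ), N (c • a) = |c| * N a)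
    (hdef : ∀ a : Fin m → ℝ, N a = 0 → a = 0)
    (habs : ∀ a b : Fin m → ℝ, (∀ i, |a i| = |b i|) → N a = N b)
    (hnormalised : ∀ i, N (Pi.single i 1) = 1)
    (hstrictmono : ∀ a b : Fin m → ℝ, N a = N b → (∀ i, |a i| ≤ |b i|) → ∀ i, |a i| = |b i|)
    (X : Fin m → Type*) [∀ i, NormedAddCommGroup (X i)] [∀ i, NormedSpace ℝ (X i)]
    [∀ i, CompleteSpace (X i)]
    (hOp : ∀ i, ∀ ε R : ℝ, 0 < ε → 0 < R → ∃ η > (0 : ℝ), ∀ (z : X i) (u : ℕ → X i),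
      WeaklyNull u → ε ≤ ‖z‖ → limsup (fun n => ‖u n‖) atTop ≤ R →
      η + liminf (fun n => ‖u n‖) atTop ≤ liminf (fun n => ‖u n - z‖) atTop) :
    ∀ ε R : ℝ, 0 < ε → 0 < R → ∃ η > (0 : ℝ), ∀ (x : ∀ i, ℕ → X i) (y : ∀ i, X i),
      (∀ i, WeaklyNull (x i)) → ε ≤ N (fun i => ‖y i‖) →
      limsup (fun n => N fun i => ‖x i n‖) atTop ≤ R →
      η + liminf (fun n => N fun i => ‖x i n‖) atTop ≤
        liminf (fun n => N fun i => ‖x i n - y i‖) atTop := by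
  intro ε R hε hR
  rcases Nat.eq_zero_or_pos m with hm | hm
  · refine ⟨1, one_pos, fun x y hweak hy hls => ?_⟩
    exfalso
    subst hm
    have hy0 : (fun i : Fin 0 => ‖y i‖) = 0 := funext fun i => i.elim0
    rw [hy0, auxN_zero hhom] at hy
    linarith
  haveI : Nonempty (Fin m) := ⟨⟨0, hm⟩⟩
  have hcont := auxN_cont hadd hhom hnormalised
  have hεm : 0 < ε / m := by positivity
  choose η₁ hη₁pos hη₁ using fun i => hOp i (ε / m) R hεm hR
  have hK : ∀ i : Fin m, ∃ d > (0:ℝ), ∀ a : Fin m → ℝ,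
      a ∈ Set.Icc (0 : Fin m → ℝ) (fun _ => R) →
      N a + d ≤ N (a + η₁ i • (Pi.single i 1 : Fin m → ℝ)) := by
    intro i
    have hKc : IsCompact (Set.Icc (0 : Fin m → ℝ) (fun _ => R)) := isCompact_Icc
    have hKne : (Set.Icc (0 : Fin m → ℝ) (fun _ => R)).Nonempty :=
      ⟨0, ⟨le_refl _, fun j => hR.le⟩⟩
    have hgc : Continuous fun a : Fin m → ℝ => N (a + η₁ i • (Pi.single i 1 : Fin m → ℝ)) - N a :=
      (hcont.comp (continuous_id.add continuous_const)).sub hcont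
    obtain ⟨a₀, ha₀K, ha₀min⟩ := hKc.exists_isMinOn hKne hgc.continuousOn
    have ha₀0 : ∀ j, 0 ≤ a₀ j := fun j => ha₀K.1 j
    have habsle : ∀ j, |a₀ j| ≤ |(a₀ + η₁ i • (Pi.single i 1 : Fin m → ℝ)) j| := by
      intro j
      rcases eq_or_ne j i with rfl | hj
      · rw [Pi.add_apply, Pi.smul_apply, Pi.single_eq_same, smul_eq_mul, mul_one,
          abs_of_nonneg (ha₀0 j),
          abs_of_nonneg (by linarith [hη₁pos j, ha₀0 j] : (0:ℝ) ≤ a₀ j + η₁ j)]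
        linarith [hη₁pos j]
      · rw [Pi.add_apply, Pi.smul_apply, Pi.single_eq_of_ne hj, smul_eq_mul, mul_zero, add_zero]
    refine ⟨N (a₀ + η₁ i • (Pi.single i 1 : Fin m → ℝ)) - N a₀, ?_, fun a haK => ?_⟩
    · have hle : N a₀ ≤ N (a₀ + η₁ i • (Pi.single i 1 : Fin m → ℝ)) := auxN_mono hadd hhom habs habsle
      rcases eq_or_lt_of_le hle with heq | hlt
      · exfalso
        have hcontra := hstrictmono _ _ heq habsle i
        have hv : (a₀ + η₁ i • (Pi.single i 1 : Fin m → ℝ)) i = a₀ i + η₁ i := by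
          rw [Pi.add_apply, Pi.smul_apply, Pi.single_eq_same, smul_eq_mul, mul_one]
        rw [hv, abs_of_nonneg (ha₀0 i),
          abs_of_nonneg (by linarith [hη₁pos i, ha₀0 i] : (0:ℝ) ≤ a₀ i + η₁ i)] at hcontra
        linarith [hη₁pos i]
      · linarith
    · have hmin := isMinOn_iff.mp ha₀min a haK
      linarith
  choose δ hδpos hδ using hK
  refine ⟨Finset.univ.inf' Finset.univ_nonempty δ, ?_, ?_⟩
  · exact (Finset.lt_inf'_iff _).2 fun i _ => hδpos i
  intro x y hweak hy hls
  set f : ℕ → ℝ := fun n => N fun i => ‖x i n‖ with hf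
  set f' : ℕ → ℝ := fun n => N fun i => ‖x i n - y i‖ with hf'
  have hf0 : ∀ n, 0 ≤ f n := fun n => auxN_nonneg hadd hhom _
  have hf'0 : ∀ n, 0 ≤ f' n := fun n => auxN_nonneg hadd hhom _
  choose C hC using fun i => auxF_weaklyNull_bounded (x i) (hweak i)
  have hC0 : ∀ i, 0 ≤ C i := fun i => le_trans (norm_nonneg _) (hC i 0)
  have hfB : ∀ n, f n ≤ ∑ i, C i := by
    intro n
    calc f n ≤ ∑ i, |‖x i n‖| := auxN_le_sum hadd hhom hnormalised _
      _ = ∑ i, ‖x i n‖ := by simp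
      _ ≤ ∑ i, C i := Finset.sum_le_sum fun i _ => hC i n
  have hf'B : ∀ n, f' n ≤ ∑ i, (C i + ‖y i‖) := by
    intro n
    calc f' n ≤ ∑ i, |‖x i n - y i‖| := auxN_le_sum hadd hhom hnormalised _
      _ ≤ ∑ i, (C i + ‖y i‖) := Finset.sum_le_sum fun i _ => by
          rw [abs_norm]
          exact le_trans (norm_sub_le _ _) (add_le_add_left (hC i n) _)
  have hbdd_below : IsBoundedUnder (· ≥ ·) atTop f' := isBoundedUnder_of ⟨0, fun n => hf'0 n⟩
  have hbdd_below_f : IsBoundedUnder (· ≥ ·) atTop f := isBoundedUnder_of ⟨0, fun n => hf0 n⟩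
  have hbdd_above : IsBoundedUnder (· ≤ ·) atTop f' := isBoundedUnder_of ⟨_, hf'B⟩
  have hbdd_above_f : IsBoundedUnder (· ≤ ·) atTop f := isBoundedUnder_of ⟨_, hfB⟩
  set L := liminf f' atTop with hL
  have hfreq : ∀ k : ℕ, ∃ᶠ n in atTop, |f' n - L| < 1 / (k + 1) := by
    intro k
    have hpos : (0:ℝ) < 1 / (k + 1) := by positivity
    have h1 : ∀ᶠ n in atTop, L - 1 / (k+1) < f' n :=
      eventually_lt_of_lt_liminf (by linarith) hbdd_below
    have h2 : ∃ᶠ n in atTop, f' n < L + 1 / (k+1) :=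
      frequently_lt_of_liminf_lt hbdd_above.isCoboundedUnder_ge (by linarith)
    refine (h2.and_eventually h1).mono fun n hn => ?_
    rw [abs_sub_lt_iff]
    exact ⟨by linarith [hn.1], by linarith [hn.2]⟩
  obtain ⟨φ, hφmono, hφ⟩ := extraction_forall_of_frequently hfreq
  have hφtend : Tendsto (fun k => f' (φ k)) atTop (𝓝 L) := by
    rw [tendsto_iff_dist_tendsto_zero]
    refine squeeze_zero (fun k => dist_nonneg) (fun k => ?_)
      tendsto_one_div_add_atTop_nhds_zero_nat
    rw [Real.dist_eq]
    exact (hφ k).le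
  set g : ℕ → (Fin m → ℝ) × (Fin m → ℝ) :=
    fun n => (fun i => ‖x i (φ n)‖, fun i => ‖x i (φ n) - y i‖) with hgdef
  have hterm : ∀ j, C j + ‖y j‖ ≤ ∑ i, (C i + ‖y i‖) :=
    fun j => Finset.single_le_sum (fun i _ => add_nonneg (hC0 i) (norm_nonneg _))
      (Finset.mem_univ j)
  have hD0 : (0:ℝ) ≤ ∑ i, (C i + ‖y i‖) :=
    Finset.sum_nonneg fun i _ => add_nonneg (hC0 i) (norm_nonneg _)
  have hgmem : ∀ n, g n ∈ Metric.closedBall (0 : (Fin m → ℝ) × (Fin m → ℝ))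
      (∑ i, (C i + ‖y i‖)) := by
    intro n
    rw [Metric.mem_closedBall, dist_zero_right, Prod.norm_def]
    refine max_le ?_ ?_
    · rw [pi_norm_le_iff_of_nonneg hD0]
      intro i
      rw [Real.norm_eq_abs, abs_norm]
      exact le_trans (hC i (φ n)) (le_trans (le_add_of_nonneg_right (norm_nonneg _)) (hterm i))
    · rw [pi_norm_le_iff_of_nonneg hD0]
      intro i
      rw [Real.norm_eq_abs, abs_norm]
      exact le_trans (norm_sub_le _ _)
        (le_trans (add_le_add_left (hC i (φ n)) _) (hterm i))
  obtain ⟨p, -, ψ, hψmono, hψ⟩ :=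
    tendsto_subseq_of_bounded Metric.isBounded_closedBall hgmem
  set θ : ℕ → ℕ := fun n => φ (ψ n) with hθdef
  have hθat : Tendsto θ atTop atTop := (hφmono.comp hψmono).tendsto_atTop
  have hg1 : Tendsto (fun n => (fun i => ‖x i (θ n)‖)) atTop (𝓝 p.1) :=
    (continuous_fst.tendsto p).comp hψ
  have hg2 : Tendsto (fun n => (fun i => ‖x i (θ n) - y i‖)) atTop (𝓝 p.2) :=
    (continuous_snd.tendsto p).comp hψ
  set a := p.1 with hadef
  set a' := p.2 with ha'def
  have ha : ∀ i, Tendsto (fun n => ‖x i (θ n)‖) atTop (𝓝 (a i)) :=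
    fun i => tendsto_pi_nhds.1 hg1 i
  have ha' : ∀ i, Tendsto (fun n => ‖x i (θ n) - y i‖) atTop (𝓝 (a' i)) :=
    fun i => tendsto_pi_nhds.1 hg2 i
  have ha0 : ∀ i, 0 ≤ a i :=
    fun i => ge_of_tendsto (ha i) (Eventually.of_forall fun n => norm_nonneg _)
  have ha'0 : ∀ i, 0 ≤ a' i :=
    fun i => ge_of_tendsto (ha' i) (Eventually.of_forall fun n => norm_nonneg _)
  have hNa : Tendsto (fun n => f (θ n)) atTop (𝓝 (N a)) := (hcont.tendsto a).comp hg1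
  have hNa' : Tendsto (fun n => f' (θ n)) atTop (𝓝 (N a')) := (hcont.tendsto a').comp hg2
  have hLθ : Tendsto (fun n => f' (θ n)) atTop (𝓝 L) := hφtend.comp hψmono.tendsto_atTop
  have hNa'L : N a' = L := tendsto_nhds_unique hNa' hLθ
  have hNaR : N a ≤ R := auxF_le_limsup hθat hNa hbdd_above_f hls
  have haR : ∀ i, a i ≤ R := by
    intro i
    have h := auxN_abs_le hadd hhom habs hnormalised a i
    rw [abs_of_nonneg (ha0 i)] at h
    linarith
  have hwθ : ∀ i, WeaklyNull fun n => x i (θ n) := fun i ϕ => (hweak i ϕ).comp hθat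
  have hgain : ∀ i, a i ≤ a' i := by
    intro i
    rcases eq_or_ne (y i) 0 with hyi | hyi
    · have hxy : (fun n => ‖x i (θ n) - y i‖) = fun n => ‖x i (θ n)‖ := by
        funext n; rw [hyi, sub_zero]
      have heq := tendsto_nhds_unique (hxy ▸ ha' i) (ha i)
      linarith [heq.le]
    · obtain ⟨η', hη'pos, hop⟩ := hOp i ‖y i‖ R (norm_pos_iff.2 hyi) hR
      have h1 := hop (y i) (fun n => x i (θ n)) (hwθ i) le_rfl
        (by rw [(ha i).limsup_eq]; exact haR i)
      rw [(ha i).liminf_eq, (ha' i).liminf_eq] at h1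
      linarith
  obtain ⟨i₀, hi₀⟩ : ∃ i, ε / m ≤ ‖y i‖ := by
    by_contra hcon
    push_neg at hcon
    have hylt : N (fun i => ‖y i‖) < ε := by
      calc N (fun i => ‖y i‖) ≤ ∑ i, |‖y i‖| := auxN_le_sum hadd hhom hnormalised _
        _ = ∑ i, ‖y i‖ := by simp
        _ < ∑ _i : Fin m, ε / m :=
            Finset.sum_lt_sum_of_nonempty Finset.univ_nonempty fun i _ => hcon i
        _ = ε := by
            rw [Finset.sum_const, Finset.card_univ, Fintype.card_fin, nsmul_eq_mul]
            field_simp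
    linarith
  have hgain₀ : a i₀ + η₁ i₀ ≤ a' i₀ := by
    have h1 := hη₁ i₀ (y i₀) (fun n => x i₀ (θ n)) (hwθ i₀) hi₀
      (by rw [(ha i₀).limsup_eq]; exact haR i₀)
    rw [(ha i₀).liminf_eq, (ha' i₀).liminf_eq] at h1
    linarith
  have hmem : a ∈ Set.Icc (0 : Fin m → ℝ) (fun _ => R) := ⟨fun j => ha0 j, fun j => haR j⟩
  have h1 := hδ i₀ a hmem
  have h2 : N (a + η₁ i₀ • (Pi.single i₀ 1 : Fin m → ℝ)) ≤ N a' := by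
    refine auxN_mono hadd hhom habs fun j => ?_
    rcases eq_or_ne j i₀ with rfl | hj
    · rw [Pi.add_apply, Pi.smul_apply, Pi.single_eq_same, smul_eq_mul, mul_one,
        abs_of_nonneg (by linarith [ha0 j, hη₁pos j] : (0:ℝ) ≤ a j + η₁ j),
        abs_of_nonneg (ha'0 j)]
      exact hgain₀
    · rw [Pi.add_apply, Pi.smul_apply, Pi.single_eq_of_ne hj, smul_eq_mul, mul_zero, add_zero,
        abs_of_nonneg (ha0 j), abs_of_nonneg (ha'0 j)]
      exact hgain j
  have h3 : liminf f atTop ≤ N a := auxF_liminf_le hθat hNa hbdd_below_f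
  have h4 : Finset.univ.inf' Finset.univ_nonempty δ ≤ δ i₀ :=
    Finset.inf'_le _ (Finset.mem_univ i₀)
  linarith
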